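/- Let (C, ▷, p) be a cartesian category with a pointed endofunctor and † an operator satisfying the fixpoint identity f† = f ∘ (p_X × id_Y) ∘ ⟨f†, id_Y⟩. Then the morphism q_X = π_ℓ ∘ (▷π_r × id_X)† : X → ▷X equals the point p_X, for every object X. -/

import Mathlib

open CategoryTheory CategoryTheory.Limits

/-- If `(C, ▷, p)` is a cartesian category with pointed endofunctor and `†` satisfies the
fixpoint identity, then `q_X = π_ℓ ∘ (▷π_r × id_X)†` equals the point `p_X`. -/
theorem stmt10 {C : Type*} [Category C] [HasFiniteProducts C]
    (F : C ⥤ C) (p : 𝟭 C ⟶ F)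
    (dag : ∀ {X Y : C}, (F.obj X ⨯ Y ⟶ X) → (Y ⟶ X))
    (hfix : ∀ {X Y : C} (f : F.obj X ⨯ Y ⟶ X),
      dag f = prod.lift (dag f) (𝟙 Y) ≫ prod.map (p.app X) (𝟙 Y) ≫ f) :
    ∀ X : C,
      dag (prod.map (F.map (prod.snd : F.obj X ⨯ X ⟶ X)) (𝟙 X)) ≫ prod.fst
        = p.app X := by
  intro X
  set g := dag (prod.map (F.map (prod.snd : F.obj X ⨯ X ⟶ X)) (𝟙 X)) with hg
  have hsnd : g ≫ prod.snd = 𝟙 X := by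
    conv_lhs => rw [hg, hfix]
    simp
    exact prod.lift_snd _ _
  have hnat : p.app (F.obj X ⨯ X) ≫ F.map prod.snd = prod.snd ≫ p.app X := by
    simpa using (p.naturality (prod.snd : F.obj X ⨯ X ⟶ X)).symm
  calc g ≫ prod.fst
      = (prod.lift g (𝟙 X) ≫ prod.map (p.app (F.obj X ⨯ X)) (𝟙 X) ≫
          prod.map (F.map (prod.snd : F.obj X ⨯ X ⟶ X)) (𝟙 X)) ≫ prod.fst := by
        conv_lhs => rw [hg, hfix]
    _ = g ≫ prod.snd ≫ p.app X := by simp [hnat]; exact prod.lift_fst _ _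
    _ = p.app X := by rw [← Category.assoc, hsnd, Category.id_comp]
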